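/- arXiv:1106.3737 — 6 statements merged into one kernel-verified Lean document; each statement's English description precedes it below -/
import Mathlib

section
/- Let X be a set, g : X → X a map, and c_n : X → ℝ (n ≥ 0) a sequence of functions with c_0 ≡ 0 satisfying c_{n+k}(x) ≤ c_n(g^k(x)) + c_k(x) for every x ∈ X and all n, k ≥ 0. Suppose there is a constant L ≥ 0 with c_n(x) ≤ L for every x ∈ X and every n ≥ 0, and suppose A ⊆ X and κ > 0 satisfy c_1(x) ≤ −L − κ for every x ∈ A. Then for every x ∈ A such that the visit frequency θ := lim_{n→∞} (1/n) · #{0 ≤ j < n : g^j(x) ∈ A} exists and is strictly positive, one has liminf_{n→∞} (1/n) c_n(x) ≤ −κθ < 0. -/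
open Filter Set

/-- abstract return-time estimate.  For a bounded subadditive cocycle `c` over a
map `g` with `c 1 ≤ -L - κ` on a set `A`, every point of `A` whose visit frequency `θ` to `A`
exists and is positive satisfies `liminf (1/n) c_n ≤ -κθ < 0`. -/
theorem stmt5 {X : Type*} (g : X → X) (c : ℕ → X → ℝ)
    (hc0 : ∀ x : X, c 0 x = 0)
    (hsub : ∀ (x : X) (n k : ℕ), c (n + k) x ≤ c n (g^[k] x) + c k x)
    (L : ℝ) (hL : 0 ≤ L) (hbound : ∀ (x : X) (n : ℕ), c n x ≤ L)
    (A : Set X) (κ : ℝ) (hκ : 0 < κ)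
    (hA : ∀ x ∈ A, c 1 x ≤ -L - κ) :
    ∀ x ∈ A, ∀ θ : ℝ, 0 < θ →
      Tendsto (fun n : ℕ => (1 / (n : ℝ)) *
          ∑ j ∈ Finset.range n, A.indicator (fun _ => (1 : ℝ)) (g^[j] x)) atTop (nhds θ) →
      liminf (fun n : ℕ => ((1 / (n : ℝ) * c n x : ℝ) : EReal)) atTop ≤ ((-κ * θ : ℝ) : EReal)
        ∧ -κ * θ < 0 := by
  intro x hx θ hθ htend
  set S : ℕ → ℝ := fun n => ∑ j ∈ Finset.range n, A.indicator (fun _ => (1 : ℝ)) (g^[j] x)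
    with hSdef
  have key : ∀ n : ℕ, ∃ m ≤ n, c m x ≤ -κ * S n := by
    intro n
    induction n with
    | zero =>
      refine ⟨0, le_refl 0, ?_⟩
      simp [hc0, hSdef]
    | succ n ih =>
      obtain ⟨m, hm, hcm⟩ := ih
      by_cases hmem : g^[n] x ∈ A
      · refine ⟨n + 1, le_refl _, ?_⟩
        have h1 : c (n + 1) x ≤ c 1 (g^[n] x) + c n x := by
          have := hsub x 1 n
          simpa [Nat.add_comm] using this
        have h2 : c n x ≤ c (n - m) (g^[m] x) + c m x := by
          have := hsub x (n - m) m
          rwa [Nat.sub_add_cancel hm] at this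
        have h3 : c 1 (g^[n] x) ≤ -L - κ := hA _ hmem
        have h4 : c (n - m) (g^[m] x) ≤ L := hbound _ _
        have hSstep : S (n + 1) = S n + 1 := by
          simp [hSdef, Finset.sum_range_succ, Set.indicator_of_mem hmem]
        rw [hSstep]
        nlinarith
      · refine ⟨m, hm.trans (Nat.le_succ n), ?_⟩
        have hSstep : S (n + 1) = S n := by
          simp [hSdef, Finset.sum_range_succ, Set.indicator_of_notMem hmem]
        rw [hSstep]
        exact hcm
  have main : ∀ n : ℕ, c n x ≤ L - κ * S n := by
    intro n
    obtain ⟨m, hm, hcm⟩ := key n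
    have h2 : c n x ≤ c (n - m) (g^[m] x) + c m x := by
      have := hsub x (n - m) m
      rwa [Nat.sub_add_cancel hm] at this
    have h4 : c (n - m) (g^[m] x) ≤ L := hbound _ _
    linarith
  have hb : Tendsto (fun n : ℕ => L * (1 / (n : ℝ)) - κ * ((1 / (n : ℝ)) * S n)) atTop
      (nhds (-κ * θ)) := by
    have h1 : Tendsto (fun n : ℕ => L * (1 / (n : ℝ))) atTop (nhds 0) := by
      simpa using tendsto_one_div_atTop_nhds_zero_nat.const_mul L
    have h2 := htend.const_mul κ
    have := h1.sub h2
    simpa [neg_mul] using this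
  have hEb : Tendsto (fun n : ℕ => ((L * (1 / (n : ℝ)) - κ * ((1 / (n : ℝ)) * S n) : ℝ) : EReal))
      atTop (nhds ((-κ * θ : ℝ) : EReal)) := EReal.tendsto_coe.mpr hb
  have hev : ∀ᶠ n : ℕ in atTop,
      ((1 / (n : ℝ) * c n x : ℝ) : EReal) ≤
        ((L * (1 / (n : ℝ)) - κ * ((1 / (n : ℝ)) * S n) : ℝ) : EReal) := by
    filter_upwards [eventually_ge_atTop 1] with n hn
    have hn' : (0 : ℝ) < n := by exact_mod_cast hn
    rw [EReal.coe_le_coe_iff]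
    have h := mul_le_mul_of_nonneg_left (main n) (le_of_lt (one_div_pos.mpr hn'))
    have heq : 1 / (n : ℝ) * (L - κ * S n) = L * (1 / (n : ℝ)) - κ * ((1 / (n : ℝ)) * S n) := by
      ring
    linarith
  constructor
  · calc liminf (fun n : ℕ => ((1 / (n : ℝ) * c n x : ℝ) : EReal)) atTop
        ≤ liminf (fun n : ℕ => ((L * (1 / (n : ℝ)) - κ * ((1 / (n : ℝ)) * S n) : ℝ) : EReal))
          atTop := liminf_le_liminf hev
      _ = ((-κ * θ : ℝ) : EReal) := hEb.liminf_eq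
  · nlinarith
end

section
/- Let f be a minimal homeomorphism of a compact metric space X. Let a_n : X → ℝ (n ≥ 0) be continuous functions with a_0 ≡ 0 satisfying a_{n+k}(x) ≤ a_n(f^k(x)) + a_k(x) for every x ∈ X and all n, k ≥ 0, and suppose there are continuous functions b_n : X → ℝ (n ≥ 0) with a_n(x) ≤ a_{n+k}(x) + b_k(f^n(x)) for every x ∈ X and all n, k ≥ 0. Fix an integer S ≥ 1 and a real λ > 0, and suppose: (i) a_{kS}(x) ≤ log λ for every x ∈ X and every k ≥ 1; (ii) there exists x₀ ∈ X with a_S(x₀) < −log λ. Then there exist an integer N ≥ 1 and a real τ ∈ (0,1) such that a_N(x) ≤ log τ for every x ∈ X. -/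
open MeasureTheory Filter Set


private lemma aux_arith {S : ℕ} (hS : 1 ≤ S) :
    ∀ n : ℕ, ∃ k j : ℕ, 1 ≤ k ∧ k ≤ S ∧ 1 ≤ j ∧ n + k = j * S := by
  intro n
  induction n using Nat.strong_induction_on with
  | _ n ih =>
    by_cases h : n < S
    · exact ⟨S - n, 1, by omega, by omega, le_rfl, by rw [one_mul]; omega⟩
    · obtain ⟨k, j, h1, h2, h3, h4⟩ := ih (n - S) (by omega)
      refine ⟨k, j + 1, h1, h2, by omega, ?_⟩
      rw [add_mul, one_mul]
      omega

private lemma aux_visit {X : Type*} [MetricSpace X] [CompactSpace X] (f : X ≃ₜ X)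
    (hmin : ∀ C : Set X, IsClosed C → C.Nonempty → ⇑f '' C = C → C = Set.univ)
    (U : Set X) (hU : IsOpen U) (hne : U.Nonempty) :
    ∃ T : ℕ, 1 ≤ T ∧ ∀ x : X, ∃ t : ℕ, t < T ∧ (⇑f)^[t] x ∈ U := by
  obtain ⟨x₀, hx₀⟩ := hne
  set W : ℕ → Set X := fun n => (⇑f)^[n] ⁻¹' U ∪ (⇑f.symm)^[n] ⁻¹' U with hW
  have hWopen : ∀ n, IsOpen (W n) := fun n =>
    ((hU.preimage (f.continuous.iterate n)).union (hU.preimage (f.symm.continuous.iterate n)))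
  have hVinv : ∀ x : X, (∃ n, x ∈ W n) → (∃ n, f.symm x ∈ W n) := by
    rintro x ⟨n, hn | hn⟩
    · refine ⟨n + 1, Or.inl ?_⟩
      simp only [Set.mem_preimage] at hn ⊢
      rw [Function.iterate_succ_apply, f.apply_symm_apply]
      exact hn
    · cases n with
      | zero =>
        refine ⟨1, Or.inl ?_⟩
        simp only [Set.mem_preimage, Function.iterate_one]
        rw [f.apply_symm_apply]
        simpa using hn
      | succ k =>
        refine ⟨k, Or.inr ?_⟩
        simp only [Set.mem_preimage] at hn ⊢
        rwa [Function.iterate_succ_apply] at hn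
  have hVinv' : ∀ x : X, (∃ n, x ∈ W n) → (∃ n, f x ∈ W n) := by
    rintro x ⟨n, hn | hn⟩
    · cases n with
      | zero =>
        refine ⟨1, Or.inr ?_⟩
        simp only [Set.mem_preimage, Function.iterate_one]
        rw [f.symm_apply_apply]
        simpa using hn
      | succ k =>
        refine ⟨k, Or.inl ?_⟩
        simp only [Set.mem_preimage] at hn ⊢
        rwa [Function.iterate_succ_apply] at hn
    · refine ⟨n + 1, Or.inr ?_⟩
      simp only [Set.mem_preimage] at hn ⊢
      rw [Function.iterate_succ_apply, f.symm_apply_apply]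
      exact hn
  have hall : ∀ x : X, ∃ n, x ∈ W n := by
    by_contra hc
    push_neg at hc
    obtain ⟨z, hz⟩ := hc
    set C : Set X := (⋃ n, W n)ᶜ with hC
    have hCclosed : IsClosed C := (isOpen_iUnion hWopen).isClosed_compl
    have hCne : C.Nonempty := ⟨z, by simp only [hC, Set.mem_compl_iff, Set.mem_iUnion]; exact fun ⟨n, hn⟩ => hz n hn⟩
    have hCinv : ⇑f '' C = C := by
      ext y
      constructor
      · rintro ⟨w, hw, rfl⟩
        simp only [hC, Set.mem_compl_iff, Set.mem_iUnion] at hw ⊢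
        intro hcon
        have := hVinv (f w) hcon
        rw [f.symm_apply_apply] at this
        exact hw this
      · intro hy
        refine ⟨f.symm y, ?_, f.apply_symm_apply y⟩
        simp only [hC, Set.mem_compl_iff, Set.mem_iUnion] at hy ⊢
        intro hcon
        have := hVinv' (f.symm y) hcon
        rw [f.apply_symm_apply] at this
        exact hy this
    have huniv := hmin C hCclosed hCne hCinv
    have hx₀V : x₀ ∈ ⋃ n, W n :=
      Set.mem_iUnion.mpr ⟨0, Or.inl (by simpa using hx₀)⟩
    have hx₀C : x₀ ∈ C := huniv ▸ Set.mem_univ x₀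
    exact hx₀C hx₀V
  obtain ⟨t, ht⟩ := isCompact_univ.elim_finite_subcover W hWopen
      (fun x _ => Set.mem_iUnion.mpr (hall x))
  set M := t.sup id with hM
  have hMde : ∀ x : X, ∃ n ≤ M, x ∈ W n := by
    intro x
    have hx := ht (Set.mem_univ x)
    simp only [Set.mem_iUnion] at hx
    obtain ⟨n, hnt, hnW⟩ := hx
    exact ⟨n, Finset.le_sup (f := id) hnt, hnW⟩
  refine ⟨2 * M + 1, by omega, fun x => ?_⟩
  obtain ⟨n, hnM, hnW⟩ := hMde ((⇑f)^[M] x)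
  rcases hnW with hn | hn
  · refine ⟨n + M, by omega, ?_⟩
    simp only [Set.mem_preimage] at hn
    rwa [Function.iterate_add_apply]
  · refine ⟨M - n, by omega, ?_⟩
    simp only [Set.mem_preimage] at hn
    have h1 : (⇑f)^[M] x = (⇑f)^[n] ((⇑f)^[M - n] x) := by
      rw [← Function.iterate_add_apply]
      congr 1
      omega
    rw [h1] at hn
    rwa [(Function.LeftInverse.iterate (fun y => f.symm_apply_apply y) n) _] at hn

/-- abstract form of the main theorem.  For a minimal homeomorphism of a
compact metric space (minimality expressed by: the only nonempty closed invariant subset is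
the whole space) and a subadditive sequence of continuous functions satisfying the two
defining conditions of a generalized dominated splitting, the sequence is uniformly
dominated: `a_N ≤ log τ` everywhere for some `N ≥ 1` and `τ ∈ (0,1)`. -/
theorem stmt7 {X : Type*} [MetricSpace X] [CompactSpace X]
    (f : X ≃ₜ X)
    (hmin : ∀ C : Set X, IsClosed C → C.Nonempty → ⇑f '' C = C → C = Set.univ)
    (a : ℕ → X → ℝ) (ha : ∀ n, Continuous (a n)) (ha0 : ∀ x : X, a 0 x = 0)
    (hsub : ∀ (x : X) (n k : ℕ), a (n + k) x ≤ a n ((⇑f)^[k] x) + a k x)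
    (b : ℕ → X → ℝ) (hb : ∀ n, Continuous (b n))
    (hab : ∀ (x : X) (n k : ℕ), a n x ≤ a (n + k) x + b k ((⇑f)^[n] x))
    (S : ℕ) (hS : 1 ≤ S) (lam : ℝ) (hlam : 0 < lam)
    (hup : ∀ (x : X) (k : ℕ), 1 ≤ k → a (k * S) x ≤ Real.log lam)
    (hx0 : ∃ x0 : X, a S x0 < -Real.log lam) :
    ∃ N : ℕ, 1 ≤ N ∧ ∃ τ : ℝ, 0 < τ ∧ τ < 1 ∧ ∀ x : X, a N x ≤ Real.log τ := by
  by_cases hlam1 : lam < 1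
  · refine ⟨S, hS, lam, hlam, hlam1, fun x => ?_⟩
    have h := hup x 1 le_rfl
    rwa [one_mul] at h
  push_neg at hlam1
  obtain ⟨x₀, hx₀⟩ := hx0
  set Lg := Real.log lam with hLg
  have hL0 : 0 ≤ Lg := Real.log_nonneg hlam1
  set ε := (-Lg - a S x₀) / 2 with hε
  have hεpos : 0 < ε := by rw [hε]; linarith
  set U : Set X := {y | a S y < -Lg - ε} with hU
  have hUopen : IsOpen U := isOpen_lt (ha S) continuous_const
  have hx₀U : x₀ ∈ U := by
    simp only [hU, Set.mem_setOf_eq]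
    rw [hε]; linarith
  obtain ⟨T, hT1, hvisit⟩ := aux_visit f hmin U hUopen ⟨x₀, hx₀U⟩
  -- uniform upper bound on b k for k ≤ S
  have hbc : ∀ k : ℕ, ∃ c : ℝ, ∀ y : X, b k y ≤ c := by
    intro k
    obtain ⟨z, _, hz⟩ := isCompact_univ.exists_isMaxOn ⟨x₀, Set.mem_univ x₀⟩ ((hb k).continuousOn)
    exact ⟨b k z, fun y => hz (Set.mem_univ y)⟩
  choose c hc using hbc
  set CB := (Finset.range (S + 1)).sup' ⟨0, Finset.mem_range.mpr (by omega)⟩ c with hCB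
  have hCb : ∀ k, k ≤ S → ∀ y, b k y ≤ CB := fun k hk y =>
    le_trans (hc k y) (Finset.le_sup' c (Finset.mem_range.mpr (by omega)))
  set G := max (Lg + CB) 0 with hG
  have hG0 : 0 ≤ G := le_max_right _ _
  have hGbound : ∀ (n : ℕ) (y : X), a n y ≤ G := by
    intro n y
    cases n with
    | zero => rw [ha0]; exact hG0
    | succ n' =>
      obtain ⟨k, j, hk1, hkS, hj1, hnk⟩ := aux_arith hS (n' + 1)
      have h1 := hab y (n' + 1) k
      rw [hnk] at h1
      have h2 := hup y j hj1
      have h3 := hCb k hkS ((⇑f)^[n' + 1] y)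
      have h4 : Lg + CB ≤ G := le_max_left _ _
      linarith
  -- block lemma
  have hblock : ∀ z, z ∈ U → ∀ d : ℕ, S ∣ d → d ≠ 0 → a d z ≤ -ε := by
    intro z hz d hdvd hd0
    obtain ⟨w, rfl⟩ := hdvd
    have hw0 : w ≠ 0 := by rintro rfl; simp at hd0
    obtain ⟨w', rfl⟩ : ∃ w', w = w' + 1 := ⟨w - 1, by omega⟩
    have hd : S * (w' + 1) = w' * S + S := by ring
    rw [hd]
    have h1 := hsub z (w' * S) S
    have h2 : a (w' * S) ((⇑f)^[S] z) ≤ Lg := by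
      cases w' with
      | zero => simpa [ha0] using hL0
      | succ w'' => exact hup _ (w'' + 1) (by omega)
    have h3 : a S z < -Lg - ε := hz
    linarith
  -- constants
  set m := ⌈(2 * G + 1) / ε⌉₊ with hm
  have hm1 : 1 ≤ m := by
    rw [hm]
    refine Nat.one_le_iff_ne_zero.mpr ?_
    have : 0 < (2 * G + 1) / ε := div_pos (by linarith) hεpos
    exact Nat.ceil_pos.mpr this |>.ne'
  have hmε : 2 * G + 1 ≤ (m : ℝ) * ε := by
    have h1 : (2 * G + 1) / ε ≤ (m : ℝ) := Nat.le_ceil _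
    calc 2 * G + 1 = ((2 * G + 1) / ε) * ε := by field_simp
      _ ≤ (m : ℝ) * ε := mul_le_mul_of_nonneg_right h1 hεpos.le
  set K := m * S + 1 with hK
  set N := K * T with hN
  have hN1 : 1 ≤ N := by
    rw [hN]
    calc 1 = 1 * 1 := by ring
      _ ≤ K * T := Nat.mul_le_mul (by omega) hT1
  refine ⟨N, hN1, Real.exp (-1), Real.exp_pos _, ?_, fun x => ?_⟩
  · have h := Real.exp_lt_exp.mpr (show (-1 : ℝ) < 0 by norm_num)
    simpa using h
  rw [Real.log_exp]
  -- choose visit times for x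
  have hvis : ∀ j : ℕ, ∃ s : ℕ, s < T ∧ (⇑f)^[s + j * T] x ∈ U := by
    intro j
    obtain ⟨s, hsT, hsU⟩ := hvisit ((⇑f)^[j * T] x)
    exact ⟨s, hsT, by rw [Function.iterate_add_apply]; exact hsU⟩
  choose sv hsvT hsvU using hvis
  set gv : ℕ → ℕ := fun j => sv j + j * T with hgv
  have hgj : ∀ j, gv j = sv j + j * T := fun _ => rfl
  have hgU : ∀ j, (⇑f)^[gv j] x ∈ U := hsvU
  have hgmono : ∀ j j' : ℕ, j < j' → gv j < gv j' := by
    intro j j' hjj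
    have h1 : gv j < (j + 1) * T := by
      have h := hsvT j
      have h' := hgj j
      rw [add_mul, one_mul]
      omega
    have h2 : (j + 1) * T ≤ j' * T := Nat.mul_le_mul_right T (by omega)
    have h3 : j' * T ≤ gv j' := by rw [hgj j']; exact Nat.le_add_left _ _
    omega
  have hgN : ∀ j, j < K → gv j < N := by
    intro j hj
    have h1 : gv j < (j + 1) * T := by
      have h := hsvT j
      have h' := hgj j
      rw [add_mul, one_mul]
      omega
    have h2 : (j + 1) * T ≤ K * T := Nat.mul_le_mul_right T (by omega)
    rw [hN]
    omega
  -- pigeonhole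
  have hmaps : ∀ j ∈ Finset.range K, gv j % S ∈ Finset.range S :=
    fun j _ => Finset.mem_range.mpr (Nat.mod_lt _ (by omega))
  have hcard : (Finset.range S).card * m < (Finset.range K).card := by
    rw [Finset.card_range, Finset.card_range, mul_comm]
    omega
  obtain ⟨r, hrmem, hrcard⟩ := Finset.exists_lt_card_fiber_of_mul_lt_card_of_maps_to hmaps hcard
  have hFcard : m + 1 ≤ (Finset.filter (fun j => gv j % S = r) (Finset.range K)).card := hrcard
  set F := Finset.filter (fun j => gv j % S = r) (Finset.range K) with hF
  set e := F.orderEmbOfCardLe hFcard with he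
  have heF : ∀ i : Fin (m + 1), (e i : ℕ) ∈ F := fun i => F.orderEmbOfCardLe_mem hFcard i
  set u : Fin (m + 1) → ℕ := fun i => gv (e i) with hu
  have heK : ∀ i : Fin (m + 1), e i < K ∧ gv (e i) % S = r := by
    intro i
    have h := heF i
    rw [hF, Finset.mem_filter, Finset.mem_range] at h
    exact h
  have huU : ∀ i, (⇑f)^[u i] x ∈ U := fun i => hgU (e i)
  have humono : ∀ i i' : Fin (m + 1), i < i' → u i < u i' :=
    fun i i' h => hgmono _ _ (e.strictMono h)
  have hures : ∀ i, u i % S = r := fun i => (heK i).2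
  have huN : ∀ i, u i < N := fun i => hgN _ (heK i).1
  -- chain
  have chain : ∀ i : ℕ, ∀ hi : i ≤ m,
      a (u ⟨i, Nat.lt_succ_of_le hi⟩ - u ⟨0, Nat.succ_pos m⟩)
        ((⇑f)^[u ⟨0, Nat.succ_pos m⟩] x) ≤ -(i : ℝ) * ε := by
    intro i
    induction i with
    | zero =>
      intro hi
      simp [ha0]
    | succ i ih =>
      intro hi
      have hi' : i ≤ m := by omega
      have ihh := ih hi'
      set Z := u ⟨0, Nat.succ_pos m⟩ with hZ
      set A := u ⟨i, Nat.lt_succ_of_le hi'⟩ with hA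
      set B := u ⟨i + 1, Nat.lt_succ_of_le hi⟩ with hB
      have hZA : Z ≤ A := by
        rcases Nat.eq_zero_or_pos i with h0 | h0
        · subst h0; exact le_rfl
        · exact (humono _ _ (Fin.mk_lt_mk.mpr h0)).le
      have hAB : A < B := humono _ _ (Fin.mk_lt_mk.mpr (by omega))
      have hres : A % S = B % S := (hures _).trans (hures _).symm
      have hdvd : S ∣ B - A := (Nat.modEq_iff_dvd' hAB.le).mp hres
      have hd0 : B - A ≠ 0 := by omega
      have hstep : a (B - A) ((⇑f)^[A] x) ≤ -ε := hblock _ (huU _) _ hdvd hd0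
      have hdec : (B - A) + (A - Z) = B - Z := by omega
      have h1 := hsub ((⇑f)^[Z] x) (B - A) (A - Z)
      rw [hdec] at h1
      have h2 : (⇑f)^[A - Z] ((⇑f)^[Z] x) = (⇑f)^[A] x := by
        rw [← Function.iterate_add_apply]
        congr 1
        omega
      rw [h2] at h1
      push_cast
      linarith
  have hfin := chain m le_rfl
  set u0 := u ⟨0, Nat.succ_pos m⟩ with hu0
  set um := u ⟨m, Nat.lt_succ_of_le le_rfl⟩ with hum
  have hu0m : u0 ≤ um := by
    rcases Nat.eq_zero_or_pos m with h0 | h0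
    · omega
    · exact (humono _ _ (Fin.mk_lt_mk.mpr h0)).le
  have humN : um < N := huN _
  have hu0N : u0 < N := huN _
  have h1 := hsub x (N - u0) u0
  rw [Nat.sub_add_cancel hu0N.le] at h1
  have h2 := hsub ((⇑f)^[u0] x) (N - um) (um - u0)
  have hdec2 : (N - um) + (um - u0) = N - u0 := by omega
  rw [hdec2] at h2
  have h3 : (⇑f)^[um - u0] ((⇑f)^[u0] x) = (⇑f)^[um] x := by
    rw [← Function.iterate_add_apply]
    congr 1
    omega
  rw [h3] at h2
  have hg1 := hGbound (N - um) ((⇑f)^[um] x)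
  have hg2 := hGbound u0 x
  linarith
end

section
/- Let f : X → X be a continuous map of a compact metric space X, and let a_n : X → ℝ (n ≥ 0) be continuous functions with a_0 ≡ 0 satisfying a_{n+k}(x) ≤ a_n(f^k(x)) + a_k(x) for every x ∈ X and all n, k ≥ 0. Fix an integer S ≥ 1 and a real λ > 0, and suppose a_{kS}(x) ≤ log λ for every x ∈ X and every k ≥ 1. Then for every x ∈ X, limsup_{n→∞} (1/n) a_n(x) ≤ (1/S) · min(log λ, 0) ≤ 0. -/
open Filter Set Topology

/-- for a subadditive sequence of continuous functions over a continuous map of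
a compact metric space satisfying the generalized domination bound `a_{kS} ≤ log λ`
everywhere, the upper exponential growth rate is at most `(1/S) min(log λ, 0) ≤ 0` at every
point. -/
theorem stmt8 {X : Type*} [MetricSpace X] [CompactSpace X]
    (f : X → X) (hf : Continuous f)
    (a : ℕ → X → ℝ) (ha : ∀ n, Continuous (a n)) (ha0 : ∀ x : X, a 0 x = 0)
    (hsub : ∀ (x : X) (n k : ℕ), a (n + k) x ≤ a n (f^[k] x) + a k x)
    (S : ℕ) (hS : 1 ≤ S) (lam : ℝ) (hlam : 0 < lam)
    (hup : ∀ (x : X) (k : ℕ), 1 ≤ k → a (k * S) x ≤ Real.log lam) :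
    ∀ x : X,
      limsup (fun n : ℕ => ((1 / (n : ℝ) * a n x : ℝ) : EReal)) atTop
          ≤ ((1 / (S : ℝ) * min (Real.log lam) 0 : ℝ) : EReal)
        ∧ 1 / (S : ℝ) * min (Real.log lam) 0 ≤ 0 := by
  intro x
  set m : ℝ := min (Real.log lam) 0 with hm
  have hm0 : m ≤ 0 := min_le_right _ _
  have hSpos : 0 < S := hS
  have hS0 : (0:ℝ) < S := by exact_mod_cast hS
  refine ⟨?_, mul_nonpos_of_nonneg_of_nonpos (by positivity) hm0⟩
  set C : ℝ := |Real.log lam| with hC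
  have hC0 : 0 ≤ C := abs_nonneg _
  -- step 1: a (k*S) y ≤ k * log lam for k ≥ 1
  have step1 : ∀ k : ℕ, 1 ≤ k → ∀ y, a (k * S) y ≤ (k : ℝ) * Real.log lam := by
    intro k hk
    induction k, hk using Nat.le_induction with
    | base => intro y; simpa using hup y 1 le_rfl
    | succ k hk ih =>
      intro y
      have h1 : a ((k + 1) * S) y ≤ a (k * S) (f^[S] y) + a S y := by
        have h := hsub y (k * S) S
        have he : (k + 1) * S = k * S + S := by ring
        rw [he]; exact h
      have h2 := ih (f^[S] y)
      have h3 : a S y ≤ Real.log lam := by simpa using hup y 1 le_rfl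
      push_cast
      linarith
  -- step 2: a (k*S) y ≤ k * m + C for all k
  have step2 : ∀ k : ℕ, ∀ y, a (k * S) y ≤ (k : ℝ) * m + C := by
    intro k y
    rcases Nat.eq_zero_or_pos k with rfl | hk
    · simp [ha0 y, hC0]
    · rcases le_or_gt (Real.log lam) 0 with h | h
      · have h1 := step1 k hk y
        have hmeq : m = Real.log lam := min_eq_left h
        rw [hmeq]; linarith
      · have h1 := hup y k hk
        have hmeq : m = 0 := min_eq_right h.le
        have hceq : C = Real.log lam := abs_of_pos h
        rw [hmeq, hceq]; linarith
  -- uniform bound M on a r for r < S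
  have hg : Continuous (fun y : X => ∑ r ∈ Finset.range S, |a r y|) := by
    apply continuous_finset_sum
    intro r _
    exact (ha r).abs
  obtain ⟨z, -, hz⟩ := isCompact_univ.exists_isMaxOn ⟨x, mem_univ x⟩ hg.continuousOn
  set M : ℝ := ∑ r ∈ Finset.range S, |a r z| with hM
  have hbound : ∀ r, r < S → ∀ y : X, a r y ≤ M := by
    intro r hr y
    have h1 : a r y ≤ |a r y| := le_abs_self _
    have h2 : |a r y| ≤ ∑ r ∈ Finset.range S, |a r y| :=
      Finset.single_le_sum (f := fun i => |a i y|) (fun i _ => abs_nonneg _) (Finset.mem_range.2 hr)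
    have h3 : (∑ r ∈ Finset.range S, |a r y|) ≤ M := hz (mem_univ y)
    linarith
  -- step 3: a n x ≤ (n/S) * m + C + M
  have step3 : ∀ n : ℕ, a n x ≤ ((n / S : ℕ) : ℝ) * m + C + M := by
    intro n
    have hid : n / S * S + n % S = n := Nat.div_add_mod' n S
    have h1 : a n x ≤ a (n / S * S) (f^[n % S] x) + a (n % S) x := by
      have h := hsub x (n / S * S) (n % S)
      rw [hid] at h; exact h
    have h2 := step2 (n / S) (f^[n % S] x)
    have h3 := hbound (n % S) (Nat.mod_lt n hSpos) x
    linarith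
  -- step 4: (1/n) a n x ≤ m/S + (C+M-m)/n for n ≥ 1
  have step4 : ∀ n : ℕ, 1 ≤ n →
      1 / (n : ℝ) * a n x ≤ m / S + (C + M - m) / n := by
    intro n hn
    have hn0 : (0:ℝ) < n := by exact_mod_cast hn
    have hmod : ((n % S : ℕ) : ℝ) < S := by exact_mod_cast Nat.mod_lt n hSpos
    have hidR : ((n / S : ℕ) : ℝ) * S + ((n % S : ℕ) : ℝ) = n := by
      exact_mod_cast congrArg (Nat.cast : ℕ → ℝ) (Nat.div_add_mod' n S)
    have hq : (n : ℝ) / S - 1 ≤ ((n / S : ℕ) : ℝ) := by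
      rw [div_sub_one hS0.ne', div_le_iff₀ hS0]
      linarith
    have hqm : ((n / S : ℕ) : ℝ) * m ≤ ((n : ℝ) / S - 1) * m :=
      mul_le_mul_of_nonpos_right hq hm0
    have h1 : a n x ≤ ((n : ℝ) / S - 1) * m + C + M := by
      have := step3 n; linarith
    have h2 : 1 / (n : ℝ) * a n x ≤ 1 / (n : ℝ) * (((n : ℝ) / S - 1) * m + C + M) :=
      mul_le_mul_of_nonneg_left h1 (by positivity)
    have h3 : 1 / (n : ℝ) * (((n : ℝ) / S - 1) * m + C + M)
        = m / S + (C + M - m) / n := by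
      field_simp
      ring
    linarith
  -- the comparison sequence tends to m/S
  have hd : Tendsto (fun n : ℕ => m / S + (C + M - m) / n) atTop (𝓝 (m / S)) := by
    have h0 : Tendsto (fun n : ℕ => (C + M - m) / n) atTop (𝓝 0) :=
      tendsto_const_div_atTop_nhds_zero_nat _
    simpa using tendsto_const_nhds.add h0
  have hdE : Tendsto (fun n : ℕ => ((m / S + (C + M - m) / n : ℝ) : EReal)) atTop
      (𝓝 ((1 / (S : ℝ) * m : ℝ) : EReal)) := by
    have he : (1 / (S : ℝ) * m : ℝ) = m / S := by ring
    rw [he]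
    exact (EReal.tendsto_coe).2 hd
  have hle : ∀ᶠ n : ℕ in atTop,
      ((1 / (n : ℝ) * a n x : ℝ) : EReal) ≤ ((m / S + (C + M - m) / n : ℝ) : EReal) := by
    filter_upwards [eventually_ge_atTop 1] with n hn
    exact_mod_cast step4 n hn
  calc limsup (fun n : ℕ => ((1 / (n : ℝ) * a n x : ℝ) : EReal)) atTop
      ≤ limsup (fun n : ℕ => ((m / S + (C + M - m) / n : ℝ) : EReal)) atTop :=
        limsup_le_limsup hle
    _ = ((1 / (S : ℝ) * m : ℝ) : EReal) := hdE.limsup_eq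
end

section
/- Let f be a minimal homeomorphism of a compact metric space X. Let a_n : X → ℝ (n ≥ 0) be continuous functions with a_0 ≡ 0 satisfying a_{n+k}(x) ≤ a_n(f^k(x)) + a_k(x) for every x ∈ X and all n, k ≥ 0, and suppose there are continuous functions b_n : X → ℝ (n ≥ 0) with a_n(x) ≤ a_{n+k}(x) + b_k(f^n(x)) for every x ∈ X and all n, k ≥ 0. Fix an integer S ≥ 1 and a real λ ≥ 1, and suppose: (i) a_{kS}(x) ≤ log λ for every x ∈ X and every k ≥ 1; (ii) there exists x₀ ∈ X with liminf_{n→∞} (1/n) a_n(x₀) < 0. Then there exist an integer N ≥ 1 and a real τ ∈ (0,1) such that a_N(x) ≤ log τ for every x ∈ X. -/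
open Filter Set

/-- abstract form of the Corollary.  For a minimal homeomorphism of a compact
metric space (minimality expressed by: the only nonempty closed invariant subset is the
whole space) and a subadditive sequence of continuous functions satisfying the uniform bound
`a_{kS} ≤ log λ` (λ ≥ 1) together with a single point whose lower growth rate is negative,
the sequence is uniformly dominated: `a_N ≤ log τ` everywhere for some `N ≥ 1`, `τ ∈ (0,1)`. -/
theorem stmt9 {X : Type*} [MetricSpace X] [CompactSpace X]
    (f : X ≃ₜ X)
    (hmin : ∀ C : Set X, IsClosed C → C.Nonempty → ⇑f '' C = C → C = Set.univ)
    (a : ℕ → X → ℝ) (ha : ∀ n, Continuous (a n)) (ha0 : ∀ x : X, a 0 x = 0)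
    (hsub : ∀ (x : X) (n k : ℕ), a (n + k) x ≤ a n ((⇑f)^[k] x) + a k x)
    (b : ℕ → X → ℝ) (hb : ∀ n, Continuous (b n))
    (hab : ∀ (x : X) (n k : ℕ), a n x ≤ a (n + k) x + b k ((⇑f)^[n] x))
    (S : ℕ) (hS : 1 ≤ S) (lam : ℝ) (hlam : 1 ≤ lam)
    (hup : ∀ (x : X) (k : ℕ), 1 ≤ k → a (k * S) x ≤ Real.log lam)
    (hx0 : ∃ x0 : X,
      liminf (fun n : ℕ => ((1 / (n : ℝ) * a n x0 : ℝ) : EReal)) atTop < 0) :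
    ∃ N : ℕ, 1 ≤ N ∧ ∃ τ : ℝ, 0 < τ ∧ τ < 1 ∧ ∀ x : X, a N x ≤ Real.log τ := by
  classical
  obtain ⟨x0, hx0⟩ := hx0
  have hne : Nonempty X := ⟨x0⟩
  set L : ℝ := Real.log lam with hLdef
  have hL0 : 0 ≤ L := Real.log_nonneg hlam
  -- each a n is bounded above
  have hbound : ∀ n : ℕ, ∃ M : ℝ, ∀ x : X, a n x ≤ M := by
    intro n
    obtain ⟨z, -, hz⟩ := isCompact_univ.exists_isMaxOn ⟨x0, mem_univ _⟩ (ha n).continuousOn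
    exact ⟨a n z, fun x => hz (mem_univ x)⟩
  choose M hM using hbound
  -- uniform bound A for all a j
  obtain ⟨A, hA⟩ : ∃ A : ℝ, ∀ (j : ℕ) (x : X), a j x ≤ A := by
    have hSne : (Finset.range S).Nonempty := ⟨0, Finset.mem_range.2 hS⟩
    refine ⟨(Finset.range S).sup' hSne M + L, fun j x => ?_⟩
    have hr : j % S < S := Nat.mod_lt _ (by omega)
    have hMr : ∀ r, r < S → ∀ y : X, a r y ≤ (Finset.range S).sup' hSne M :=
      fun r hrS y => (hM r y).trans (Finset.le_sup' M (Finset.mem_range.2 hrS))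
    have heq0 : S * (j / S) + j % S = j := Nat.div_add_mod j S
    rcases Nat.eq_zero_or_pos (j / S) with hq | hq
    · have hjr : j = j % S := by rw [hq] at heq0; simpa using heq0.symm
      have := hMr (j % S) hr x
      rw [← hjr] at this
      linarith
    · have hjeq : j = (j / S) * S + j % S := by
        rw [mul_comm (j / S) S]; exact heq0.symm
      have h1 := hsub x ((j / S) * S) (j % S)
      have h2 := hup ((⇑f)^[j % S] x) (j / S) hq
      have h3 := hMr (j % S) hr x
      rw [← hjeq] at h1
      linarith
  have hA0 : 0 ≤ A := by have := hA 0 x0; rw [ha0 x0] at this; exact this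
  -- find K ≥ 1 with a K x0 < -(2A+1)
  obtain ⟨K, hK1, hKneg⟩ : ∃ K : ℕ, 1 ≤ K ∧ a K x0 < -(2 * A + 1) := by
    obtain ⟨z, hz1, hz2⟩ := exists_between hx0
    have hzt : z ≠ ⊤ := ne_top_of_lt hz2
    have hzb : z ≠ ⊥ := by
      rintro rfl; simp at hz1
    set c : ℝ := z.toReal with hcdef
    have hc : (c : EReal) = z := EReal.coe_toReal hzt hzb
    have hcneg : c < 0 := by
      rw [← hc] at hz2
      exact_mod_cast hz2
    have hfreq : ∃ᶠ n : ℕ in atTop,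
        ((1 / (n : ℝ) * a n x0 : ℝ) : EReal) < (c : EReal) :=
      frequently_lt_of_liminf_lt (h := by rw [hc]; exact hz1)
    obtain ⟨n, hn, hlt⟩ :=
      frequently_atTop.mp hfreq (max 1 ⌈(2 * A + 1) / (-c)⌉₊)
    have hn1 : 1 ≤ n := le_trans (le_max_left _ _) hn
    have npos : (0 : ℝ) < (n : ℝ) := by exact_mod_cast Nat.lt_of_lt_of_le Nat.zero_lt_one hn1
    have hlt' : 1 / (n : ℝ) * a n x0 < c := by exact_mod_cast hlt
    have h2 : a n x0 < (n : ℝ) * c := by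
      have h3 := mul_lt_mul_of_pos_left hlt' npos
      rwa [show (n : ℝ) * (1 / (n : ℝ) * a n x0) = a n x0 from by field_simp] at h3
    have hceil : (2 * A + 1) / (-c) ≤ (n : ℝ) := by
      have h4 : (⌈(2 * A + 1) / (-c)⌉₊ : ℝ) ≤ (n : ℝ) := by
        exact_mod_cast le_trans (le_max_right _ _) hn
      exact le_trans (Nat.le_ceil _) h4
    have h5 : 2 * A + 1 ≤ (n : ℝ) * (-c) := by
      rwa [div_le_iff₀ (by linarith)] at hceil
    refine ⟨n, hn1, ?_⟩
    nlinarith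
  -- the open set U and its forward-covering
  set U : Set X := {x | a K x < -(2 * A + 1)} with hUdef
  have hUopen : IsOpen U := isOpen_lt (ha K) continuous_const
  have hx0U : x0 ∈ U := hKneg
  set V : Set X := ⋃ t : ℕ, (⇑f)^[t] ⁻¹' U with hVdef
  have hVopen : IsOpen V :=
    isOpen_iUnion fun t => hUopen.preimage (f.continuous.iterate t)
  have hVuniv : V = univ := by
    by_contra hV
    set C : Set X := Vᶜ with hCdef
    have hCne : C.Nonempty := nonempty_compl.2 hV
    have hCclosed : IsClosed C := hVopen.isClosed_compl
    have hmem : ∀ x, x ∈ C ↔ ∀ t : ℕ, (⇑f)^[t] x ∉ U := by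
      intro x
      simp [hCdef, hVdef]
    have hmapsto : ∀ x ∈ C, f x ∈ C := by
      intro x hx
      rw [hmem] at hx ⊢
      intro t
      rw [← Function.iterate_succ_apply]
      exact hx (t + 1)
    have himg : ⇑f '' C ⊆ C := by
      rintro _ ⟨y, hy, rfl⟩; exact hmapsto y hy
    -- each iterate image
    have hanti : ∀ n : ℕ, (⇑f)^[n + 1] '' C ⊆ (⇑f)^[n] '' C := by
      intro n
      rw [Function.iterate_succ, Set.image_comp]
      exact Set.image_mono himg
    have hcompact : ∀ n : ℕ, IsCompact ((⇑f)^[n] '' C) :=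
      fun n => (hCclosed.isCompact).image (f.continuous.iterate n)
    have hclosed : ∀ n : ℕ, IsClosed ((⇑f)^[n] '' C) := fun n => (hcompact n).isClosed
    have hnonempty : ∀ n : ℕ, ((⇑f)^[n] '' C).Nonempty := fun n => hCne.image _
    have hDne : (⋂ n : ℕ, (⇑f)^[n] '' C).Nonempty :=
      IsCompact.nonempty_iInter_of_sequence_nonempty_isCompact_isClosed
        _ hanti hnonempty (hcompact 0) hclosed
    have hDclosed : IsClosed (⋂ n : ℕ, (⇑f)^[n] '' C) := isClosed_iInter hclosed
    have hDinv : ⇑f '' (⋂ n : ℕ, (⇑f)^[n] '' C) = ⋂ n : ℕ, (⇑f)^[n] '' C := by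
      rw [Set.image_iInter f.bijective]
      have hstep : ∀ n : ℕ, ⇑f '' ((⇑f)^[n] '' C) = (⇑f)^[n + 1] '' C := by
        intro n
        rw [Function.iterate_succ', Set.image_comp]
      simp_rw [hstep]
      apply subset_antisymm
      · intro x hx
        rw [mem_iInter] at hx ⊢
        intro m
        exact hanti m (hx m)
      · intro x hx
        rw [mem_iInter] at hx ⊢
        intro m
        exact hx (m + 1)
    have hDuniv := hmin _ hDclosed hDne hDinv
    have hDC : (⋂ n : ℕ, (⇑f)^[n] '' C) ⊆ C := by
      intro x hx
      have := (mem_iInter.1 hx) 0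
      simpa using this
    have hx0C : x0 ∈ C := hDC (hDuniv ▸ mem_univ x0)
    rw [hmem] at hx0C
    exact hx0C 0 (by simpa using hx0U)
  -- finite subcover
  obtain ⟨s, hs⟩ := isCompact_univ.elim_finite_subcover
    (fun t : ℕ => (⇑f)^[t] ⁻¹' U)
    (fun t => hUopen.preimage (f.continuous.iterate t))
    (by rw [← hVdef, hVuniv])
  set T : ℕ := s.sup id with hTdef
  have hvisit : ∀ x : X, ∃ t : ℕ, t ≤ T ∧ a K ((⇑f)^[t] x) < -(2 * A + 1) := by
    intro x
    have := hs (mem_univ x)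
    rw [mem_iUnion₂] at this
    obtain ⟨t, hts, htx⟩ := this
    exact ⟨t, Finset.le_sup (f := id) hts, htx⟩
  -- conclusion
  refine ⟨T + K, by omega, Real.exp (-1), Real.exp_pos _, ?_, ?_⟩
  · rw [Real.exp_lt_one_iff]; norm_num
  · intro x
    rw [Real.log_exp]
    obtain ⟨t, htT, htU⟩ := hvisit x
    have e1 : a ((T - t + K) + t) x ≤ a (T - t + K) ((⇑f)^[t] x) + a t x :=
      hsub x (T - t + K) t
    have heq : (T - t + K) + t = T + K := by omega
    rw [heq] at e1
    have e2 : a (T - t + K) ((⇑f)^[t] x)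
        ≤ a (T - t) ((⇑f)^[K] ((⇑f)^[t] x)) + a K ((⇑f)^[t] x) :=
      hsub ((⇑f)^[t] x) (T - t) K
    have b1 := hA (T - t) ((⇑f)^[K] ((⇑f)^[t] x))
    have b2 := hA t x
    linarith
end

section
/- Let f : X → X be a continuous map of a compact metric space X, and let a_n : X → ℝ (n ≥ 0) be continuous functions with a_0 ≡ 0 satisfying a_{n+k}(x) ≤ a_n(f^k(x)) + a_k(x) for every x ∈ X and all n, k ≥ 0. Then for every x ∈ X and every integer S ≥ 1, liminf_{k→∞} (1/(kS)) a_{kS}(x) ≤ liminf_{n→∞} (1/n) a_n(x). -/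
open Filter Set

lemma keyreal {C c ε Sr n D v : ℝ} (hC : 0 ≤ C) (hS : 0 ≤ Sr) (hn : 1 ≤ n)
    (hD : n < D) (hDS : D ≤ n + Sr) (hv : v ≤ C + c * n)
    (hε : (C + Sr * (|c| + C)) / n ≤ ε) : 1 / D * v ≤ c + ε := by
  have hD0 : (0:ℝ) < D := by linarith
  have hn0 : (0:ℝ) < n := by linarith
  set t := (C + Sr * (|c| + C)) / n with ht
  have ht0 : 0 ≤ t := div_nonneg (by positivity) hn0.le
  have hEn : t * n = C + Sr * (|c| + C) := div_mul_cancel₀ _ hn0.ne'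
  have h1 : 1 / D * v ≤ (C + c * n) / D := by
    rw [one_div_mul_eq_div]; gcongr
  have h2 : (C + c * n) / D ≤ c + t := by
    rw [div_le_iff₀ hD0]
    have htn : t * n ≤ t * D := by nlinarith
    have hc1 : (-|c|) * (D - n) ≤ c * (D - n) := by
      apply mul_le_mul_of_nonneg_right (neg_abs_le c); linarith
    have hc2 : (-|c|) * Sr ≤ (-|c|) * (D - n) := by
      apply mul_le_mul_of_nonpos_left _ (neg_nonpos.mpr (abs_nonneg c)); linarith
    nlinarith [abs_nonneg c]
  linarith

/-- for a subadditive sequence of continuous functions over a continuous map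
of a compact metric space, the lower growth rate along multiples of `S` is at most the lower
growth rate along all positive integers. -/
theorem stmt10 {X : Type*} [MetricSpace X] [CompactSpace X]
    (f : X → X) (hf : Continuous f)
    (a : ℕ → X → ℝ) (ha : ∀ n, Continuous (a n)) (ha0 : ∀ x : X, a 0 x = 0)
    (hsub : ∀ (x : X) (n k : ℕ), a (n + k) x ≤ a n (f^[k] x) + a k x) :
    ∀ x : X, ∀ S : ℕ, 1 ≤ S →
      liminf (fun k : ℕ => ((1 / ((k * S : ℕ) : ℝ) * a (k * S) x : ℝ) : EReal)) atTop
        ≤ liminf (fun n : ℕ => ((1 / (n : ℝ) * a n x : ℝ) : EReal)) atTop := by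
  intro x S hS
  have hS0 : 0 < S := hS
  -- a uniform upper bound for `a r`, `r ≤ S`
  have hbd : ∀ r : ℕ, ∃ Cr : ℝ, ∀ y : X, a r y ≤ Cr := by
    intro r
    obtain ⟨z, _, hz⟩ := isCompact_univ.exists_isMaxOn ⟨x, mem_univ x⟩ (ha r).continuousOn
    exact ⟨a r z, fun y => hz (mem_univ y)⟩
  choose B hB using hbd
  obtain ⟨C, hC0, hC⟩ : ∃ C : ℝ, 0 ≤ C ∧ ∀ r ≤ S, ∀ y : X, a r y ≤ C := by
    refine ⟨((Finset.range (S+1)).sup' ⟨0, by simp⟩ B) ⊔ 0, le_sup_right, ?_⟩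
    intro r hr y
    exact le_sup_of_le_left ((hB r y).trans
      (Finset.le_sup' B (Finset.mem_range.mpr (Nat.lt_succ_of_le hr))))
  set h : ℕ → EReal := fun n : ℕ => ((1 / (n : ℝ) * a n x : ℝ) : EReal) with hh
  set g : ℕ → EReal := fun k : ℕ => ((1 / ((k * S : ℕ) : ℝ) * a (k * S) x : ℝ) : EReal) with hg
  have main : ∀ c : ℝ, liminf h atTop < (c : EReal) →
      ∀ ε : ℝ, 0 < ε → liminf g atTop ≤ ((c + ε : ℝ) : EReal) := by
    intro c hc ε hε
    have hfreq : ∃ᶠ n in atTop, h n < (c : EReal) := frequently_lt_of_liminf_lt (by isBoundedDefault) hc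
    apply liminf_le_of_frequently_le'
    rw [frequently_atTop] at hfreq ⊢
    intro K
    obtain ⟨n0, hn0⟩ := exists_nat_ge ((C + (S:ℝ) * (|c| + C)) / ε)
    obtain ⟨n, hn, hnc⟩ := hfreq (max (max n0 1) (K * S))
    have hn1 : 1 ≤ n := le_trans (le_trans (le_max_right n0 1) (le_max_left _ _)) hn
    have hnn0 : n0 ≤ n := le_trans (le_trans (le_max_left n0 1) (le_max_left _ _)) hn
    have hnK : K * S ≤ n := le_trans (le_max_right _ _) hn
    set k := n / S + 1 with hk
    have hmod := Nat.div_add_mod n S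
    have hmodlt := Nat.mod_lt n hS0
    have hnD : n < k * S := by
      have : k * S = S * (n / S) + S := by ring
      omega
    have hDS : k * S ≤ n + S := by
      have : k * S = S * (n / S) + S := by ring
      omega
    have hkK : K ≤ k := by
      have : K ≤ n / S := (Nat.le_div_iff_mul_le hS0).mpr hnK
      omega
    refine ⟨k, hkK, ?_⟩
    -- subadditive bound
    set r := k * S - n with hr
    have hrn : r + n = k * S := by omega
    have hrS : r ≤ S := by omega
    have haD : a (k * S) x ≤ C + a n x := by
      calc a (k * S) x = a (r + n) x := by rw [hrn]
        _ ≤ a r (f^[n] x) + a n x := hsub x r n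
        _ ≤ C + a n x := by
            have := hC r hrS (f^[n] x); linarith
    -- from hnc, real inequality
    have hnc' : 1 / (n : ℝ) * a n x < c := by
      have := hnc
      simp only [hh] at this
      exact_mod_cast this
    have hnR : (1:ℝ) ≤ (n:ℝ) := by exact_mod_cast hn1
    have hanx : a n x ≤ c * (n:ℝ) := by
      have hnpos : (0:ℝ) < (n:ℝ) := by linarith
      rw [one_div_mul_eq_div, div_lt_iff₀ hnpos] at hnc'
      linarith
    have hεn : (C + (S:ℝ) * (|c| + C)) / (n:ℝ) ≤ ε := by
      rw [div_le_iff₀ (by linarith : (0:ℝ) < (n:ℝ))]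
      have h2 : (C + (S:ℝ) * (|c| + C)) / ε ≤ (n:ℝ) := by
        exact hn0.trans (by exact_mod_cast hnn0)
      rw [div_le_iff₀ hε] at h2
      nlinarith
    have key : 1 / ((k * S : ℕ) : ℝ) * a (k * S) x ≤ c + ε := by
      refine keyreal hC0 (by positivity) hnR ?_ ?_ (by linarith) hεn
      · exact_mod_cast hnD
      · push_cast
        exact_mod_cast hDS
    simp only [hg]
    exact_mod_cast key
  have step1 : ∀ c : ℝ, liminf h atTop < (c : EReal) → liminf g atTop ≤ (c : EReal) := by
    intro c hc
    by_contra hcon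
    push_neg at hcon
    obtain ⟨c', hc1, hc2⟩ := EReal.exists_between_coe_real hcon
    have hc1' : c < c' := by exact_mod_cast hc1
    have := main c hc (c' - c) (by linarith)
    rw [show c + (c' - c) = c' by ring] at this
    exact absurd (this.trans_lt hc2) (lt_irrefl _)
  by_contra hcon
  push_neg at hcon
  obtain ⟨c, hc1, hc2⟩ := EReal.exists_between_coe_real hcon
  exact absurd ((step1 c hc1).trans_lt hc2) (lt_irrefl _)
end

section
/- Let f : X → X be a homeomorphism of a compact metric space X, let μ be an f-invariant Borel probability measure, and let a_n : X → ℝ (n ≥ 0) be continuous functions with a_0 ≡ 0 satisfying a_{n+k}(x) ≤ a_n(f^k(x)) + a_k(x) for every x ∈ X and all n, k ≥ 0. Fix an integer S ≥ 1 and a real λ ≥ 1, and suppose a_{kS}(x) ≤ log λ for every x ∈ X and every k ≥ 1. Let A := {x ∈ X : a_S(x) < −log λ}. Then for μ-almost every x ∈ A, liminf_{n→∞} (1/n) a_n(x) < 0. -/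
open MeasureTheory Filter Set

open scoped ENNReal NNReal
open MeasureTheory Filter Set

/-- number of "visits" of the `S`-step orbit of `x` to `B` among times `0, ..., N-1`. -/
noncomputable def stmt11cnt {X : Type*} (f : X → X) (B : Set X) (S : ℕ) (N : ℕ) (x : X) : ℕ :=
  ∑ j ∈ Finset.range N, B.indicator (fun _ => 1) ((f)^[j * S] x)

lemma stmt11cnt_succ {X : Type*} (f : X → X) (B : Set X) (S N : ℕ) (x : X) :
    stmt11cnt f B S (N + 1) x
      = stmt11cnt f B S N x + B.indicator (fun _ => 1) ((f)^[N * S] x) :=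
  Finset.sum_range_succ _ _

lemma stmt11cnt_le {X : Type*} (f : X → X) (B : Set X) (S N : ℕ) (x : X) :
    stmt11cnt f B S N x ≤ N := by
  have : ∀ j ∈ Finset.range N, B.indicator (fun _ => (1:ℕ)) ((f)^[j * S] x) ≤ 1 := by
    intro j _
    exact Set.indicator_apply_le (fun _ => le_rfl)
  calc stmt11cnt f B S N x ≤ ∑ _j ∈ Finset.range N, 1 := Finset.sum_le_sum this
  _ = N := by simp

/-- Combinatorial core: each visit to `B` costs at least `δ` in the subadditive cocycle. -/
lemma stmt11comb {X : Type*} (f : X → X)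
    (a : ℕ → X → ℝ) (ha0 : ∀ x : X, a 0 x = 0)
    (hsub : ∀ (x : X) (n k : ℕ), a (n + k) x ≤ a n ((f)^[k] x) + a k x)
    (S : ℕ) (L δ : ℝ) (hL : 0 ≤ L) (hδ : 0 < δ)
    (hup : ∀ (x : X) (k : ℕ), 1 ≤ k → a (k * S) x ≤ L)
    (B : Set X) (hB : ∀ x ∈ B, a S x ≤ -L - δ) (x : X) :
    ∀ N : ℕ, a (N * S + S) x
      ≤ B.indicator (fun _ => -L) ((f)^[N * S] x) + (L - δ * (stmt11cnt f B S (N+1) x : ℝ)) := by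
  intro N
  induction N using Nat.strong_induction_on with
  | _ N IH =>
    classical
    have hstep : a (N * S + S) x ≤ a S ((f)^[N * S] x) + a (N * S) x := by
      have := hsub x S (N * S)
      rwa [add_comm S (N * S)] at this
    by_cases hN : (f)^[N * S] x ∈ B
    · -- visit case
      have hcnt : stmt11cnt f B S (N + 1) x = stmt11cnt f B S N x + 1 := by
        rw [stmt11cnt_succ, Set.indicator_of_mem hN]
      have hprev : a (N * S) x ≤ L - δ * (stmt11cnt f B S N x : ℝ) := by
        cases N with
        | zero => simpa [ha0, stmt11cnt] using hL
        | succ M =>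
          have h1 := IH M (Nat.lt_succ_self M)
          have h2 : B.indicator (fun _ => -L) ((f)^[M * S] x) ≤ 0 := by
            classical
            rw [Set.indicator_apply]
            split <;> simp [hL]
          have h3 : (M + 1) * S = M * S + S := by ring
          rw [h3]
          nlinarith [h1]
      have hb := hB _ hN
      rw [Set.indicator_of_mem hN, hcnt]
      push_cast
      nlinarith [hstep]
    · -- non-visit case
      rw [Set.indicator_of_notMem hN, zero_add]
      have hcnt : stmt11cnt f B S (N + 1) x = stmt11cnt f B S N x := by
        rw [stmt11cnt_succ, Set.indicator_of_notMem hN, add_zero]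
      rw [hcnt]
      by_cases h0 : stmt11cnt f B S N x = 0
      · rw [h0]
        have : a ((N + 1) * S) x ≤ L := hup x (N + 1) (Nat.le_add_left 1 N)
        have h3 : (N + 1) * S = N * S + S := by ring
        rw [h3] at this
        simpa using this
      · -- there is a previous visit
        have hex : ∃ j < N, (f)^[j * S] x ∈ B := by
          by_contra hc
          push_neg at hc
          apply h0
          apply Finset.sum_eq_zero
          intro j hj
          exact Set.indicator_of_notMem (hc j (Finset.mem_range.mp hj)) _
        obtain ⟨j, hjN, hjB⟩ := hex
        have hN1 : 1 ≤ N := Nat.one_le_iff_ne_zero.mpr (by rintro rfl; omega)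
        set P : ℕ → Prop := fun i => (f)^[i * S] x ∈ B with hP
        set j0 := Nat.findGreatest P (N - 1) with hj0
        have hjle : j ≤ N - 1 := by omega
        have hj0P : P j0 := Nat.findGreatest_spec hjle hjB
        have hj0le : j0 ≤ N - 1 := Nat.findGreatest_le _
        have hj0N : j0 < N := by omega
        have hnone : ∀ i, j0 < i → i < N → ¬ P i := by
          intro i hi1 hi2
          exact Nat.findGreatest_is_greatest hi1 (by omega)
        -- counts agree
        have hcnt2 : stmt11cnt f B S N x = stmt11cnt f B S (j0 + 1) x := by
          refine (Finset.sum_subset ?_ ?_).symm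
          · exact Finset.range_subset_range.mpr (by omega)
          · intro i hiN hij0
            have hi1 : i < N := Finset.mem_range.mp hiN
            have hi2 : j0 < i := by
              simp only [Finset.mem_range] at hij0; omega
            exact Set.indicator_of_notMem (hnone i hi2 hi1) _
        -- split at the last visit
        have hsplit : a (N * S + S) x
            ≤ a ((N - j0) * S) ((f)^[j0 * S + S] x) + a (j0 * S + S) x := by
          have harith : (N - j0) * S + (j0 * S + S) = N * S + S := by
            have : (N - j0) * S + j0 * S = N * S := by
              rw [← Nat.add_mul, Nat.sub_add_cancel (le_of_lt hj0N)]
            omega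
          have := hsub x ((N - j0) * S) (j0 * S + S)
          rwa [harith] at this
        have hgap : a ((N - j0) * S) ((f)^[j0 * S + S] x) ≤ L :=
          hup _ (N - j0) (by omega)
        have hlast := IH j0 hj0N
        rw [Set.indicator_of_mem hj0P] at hlast
        rw [hcnt2]
        nlinarith [hsplit, hgap, hlast]
lemma stmt11div_le_one {X : Type*} (f : X → X) (B : Set X) (S N : ℕ) (x : X) :
    (stmt11cnt f B S N x : ℝ≥0∞) / N ≤ 1 := by
  rcases Nat.eq_zero_or_pos N with h | h
  · simp [h, stmt11cnt]
  · refine ENNReal.div_le_of_le_mul ?_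
    rw [one_mul]
    exact_mod_cast stmt11cnt_le f B S N x

lemma stmt11limsup_le {u v : ℕ → ℝ≥0∞} (h : ∀ n : ℕ, 1 ≤ n → u n ≤ v n + 1 / n) :
    limsup u atTop ≤ limsup v atTop := by
  refine ENNReal.le_of_forall_pos_le_add fun ε hε hfin => ?_
  have h2 : (0 : ℝ≥0∞) < ε / 2 :=
    ENNReal.div_pos (by exact_mod_cast hε.ne') (by norm_num)
  have hlt : limsup v atTop < limsup v atTop + ε / 2 :=
    ENNReal.lt_add_right hfin.ne h2.ne'
  have h1 := Filter.eventually_lt_of_limsup_lt hlt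
  have h2' : ∀ᶠ n : ℕ in atTop, (n : ℝ≥0∞)⁻¹ < ε / 2 :=
    ENNReal.tendsto_inv_nat_nhds_zero.eventually_lt_const h2
  have h3 : ∀ᶠ n in atTop, u n ≤ limsup v atTop + ε := by
    filter_upwards [h1, h2', eventually_ge_atTop 1] with n hn1 hn2 hn3
    calc u n ≤ v n + 1 / n := h n hn3
    _ ≤ (limsup v atTop + ε / 2) + ε / 2 := by
        refine add_le_add hn1.le ?_
        rw [one_div]; exact hn2.le
    _ = limsup v atTop + ε := by
        rw [add_assoc, ENNReal.add_halves]
  exact limsup_le_of_le (by isBoundedDefault) h3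

lemma stmt11cnt_shift {X : Type*} (f : X → X) (B : Set X) (S N : ℕ) (x : X) :
    stmt11cnt f B S (N + 1) x
      = stmt11cnt f B S N ((f)^[S] x) + B.indicator (fun _ => 1) x := by
  unfold stmt11cnt
  rw [Finset.sum_range_succ']
  congr 1
  · refine Finset.sum_congr rfl fun j _ => ?_
    congr 1
    rw [Nat.succ_mul, Function.iterate_add_apply]
  · simp

lemma stmt11inv {X : Type*} (f : X → X) (B : Set X) (S : ℕ) (x : X) :
    limsup (fun N : ℕ => (stmt11cnt f B S N ((f)^[S] x) : ℝ≥0∞) / N) atTop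
      = limsup (fun N : ℕ => (stmt11cnt f B S N x : ℝ≥0∞) / N) atTop := by
  have hind : ∀ y : X, B.indicator (fun _ => (1:ℕ)) y ≤ 1 :=
    fun y => Set.indicator_apply_le (fun _ => le_rfl)
  have key1 : ∀ N, stmt11cnt f B S N ((f)^[S] x) ≤ stmt11cnt f B S N x + 1 := by
    intro N
    have h1 : stmt11cnt f B S N ((f)^[S] x) ≤ stmt11cnt f B S (N + 1) x := by
      rw [stmt11cnt_shift]; exact Nat.le_add_right _ _
    calc stmt11cnt f B S N ((f)^[S] x) ≤ stmt11cnt f B S (N + 1) x := h1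
    _ ≤ stmt11cnt f B S N x + 1 := by
        rw [stmt11cnt_succ]; exact Nat.add_le_add_left (hind _) _
  have key2 : ∀ N, stmt11cnt f B S N x ≤ stmt11cnt f B S N ((f)^[S] x) + 1 := by
    intro N
    calc stmt11cnt f B S N x ≤ stmt11cnt f B S (N + 1) x := by
          rw [stmt11cnt_succ]; exact Nat.le_add_right _ _
    _ = stmt11cnt f B S N ((f)^[S] x) + B.indicator (fun _ => 1) x := stmt11cnt_shift ..
    _ ≤ _ := Nat.add_le_add_left (hind _) _
  have div_ineq : ∀ (c d : ℕ) (N : ℕ), c ≤ d + 1 →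
      (c : ℝ≥0∞) / N ≤ (d : ℝ≥0∞) / N + 1 / N := by
    intro c d N hcd
    rw [← ENNReal.add_div]
    exact ENNReal.div_le_div_right (by exact_mod_cast hcd) _
  refine le_antisymm (stmt11limsup_le fun n _ => div_ineq _ _ _ (key1 n))
    (stmt11limsup_le fun n _ => div_ineq _ _ _ (key2 n))

lemma stmt11cnt_meas {X : Type*} [MeasurableSpace X] {f : X → X} (hf : Measurable f)
    {B : Set X} (hBm : MeasurableSet B) (S N : ℕ) :
    Measurable (fun x => (stmt11cnt f B S N x : ℝ≥0∞)) := by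
  have : ∀ j : ℕ, Measurable (fun x => ((f)^[j * S] ⁻¹' B).indicator (fun _ => (1:ℝ≥0∞)) x) := by
    intro j
    exact measurable_const.indicator ((hf.iterate (j * S)) hBm)
  have heq : (fun x => (stmt11cnt f B S N x : ℝ≥0∞))
      = fun x => ∑ j ∈ Finset.range N, ((f)^[j * S] ⁻¹' B).indicator (fun _ => (1:ℝ≥0∞)) x := by
    funext x
    unfold stmt11cnt
    push_cast
    refine Finset.sum_congr rfl fun j _ => ?_
    classical
    by_cases h : (f)^[j * S] x ∈ B <;>
      simp [Set.indicator_of_mem, Set.indicator_of_notMem, h, Set.mem_preimage]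
  rw [heq]
  exact Finset.measurable_sum _ fun j _ => this j

lemma stmt11null {X : Type*} [MeasurableSpace X]
    {f : X → X} (hf : Measurable f)
    (μ : Measure X) [IsProbabilityMeasure μ] (hμ : MeasurePreserving f μ μ)
    {B : Set X} (hBm : MeasurableSet B) (S : ℕ) :
    μ (B ∩ {x | limsup (fun N : ℕ => (stmt11cnt f B S N x : ℝ≥0∞) / N) atTop = 0}) = 0 := by
  set F : X → ℝ≥0∞ := fun x => limsup (fun N : ℕ => (stmt11cnt f B S N x : ℝ≥0∞) / N) atTop
    with hF
  set I : Set X := {x | F x = 0} with hIdef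
  have humeas : ∀ N : ℕ, Measurable (fun x => (stmt11cnt f B S N x : ℝ≥0∞) / N) :=
    fun N => (stmt11cnt_meas hf hBm S N).div_const _
  have hFmeas : Measurable F := Measurable.limsup humeas
  have hI : MeasurableSet I := hFmeas (measurableSet_singleton 0)
  -- invariance of I under the iterates
  have hFiter : ∀ (j : ℕ) (y : X), F ((f)^[j * S] y) = F y := by
    intro j
    induction j with
    | zero => intro y; simp
    | succ j IH =>
      intro y
      have : (f)^[(j+1) * S] y = (f)^[j * S] ((f)^[S] y) := by
        rw [Nat.succ_mul, Function.iterate_add_apply]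
      rw [this, IH ((f)^[S] y)]
      exact stmt11inv f B S y
  have hIj : ∀ j : ℕ, (f)^[j * S] ⁻¹' I = I := by
    intro j
    ext y
    simp only [hIdef, Set.mem_preimage, Set.mem_setOf_eq, hFiter j y]
  -- integral computation
  have hint : ∀ N : ℕ, 1 ≤ N →
      ∫⁻ x in I, (stmt11cnt f B S N x : ℝ≥0∞) / N ∂μ = μ (B ∩ I) := by
    intro N hN
    have hmulc : ∀ x : X, (stmt11cnt f B S N x : ℝ≥0∞) / N
        = (stmt11cnt f B S N x : ℝ≥0∞) * (N : ℝ≥0∞)⁻¹ := fun x => rfl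
    calc ∫⁻ x in I, (stmt11cnt f B S N x : ℝ≥0∞) / N ∂μ
        = (∫⁻ x in I, (stmt11cnt f B S N x : ℝ≥0∞) ∂μ) * (N : ℝ≥0∞)⁻¹ := by
          simp_rw [hmulc]
          exact lintegral_mul_const _ (stmt11cnt_meas hf hBm S N)
      _ = (∑ j ∈ Finset.range N,
            ∫⁻ x in I, ((f)^[j * S] ⁻¹' B).indicator (fun _ => (1:ℝ≥0∞)) x ∂μ)
            * (N : ℝ≥0∞)⁻¹ := by
          congr 1
          rw [← lintegral_finset_sum]
          · apply lintegral_congr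
            intro x
            unfold stmt11cnt
            push_cast
            refine Finset.sum_congr rfl fun j _ => ?_
            classical
            by_cases h : (f)^[j * S] x ∈ B <;>
              simp [Set.indicator_of_mem, Set.indicator_of_notMem, h, Set.mem_preimage]
          · exact fun j _ => measurable_const.indicator ((hf.iterate (j * S)) hBm)
      _ = (∑ j ∈ Finset.range N, μ (B ∩ I)) * (N : ℝ≥0∞)⁻¹ := by
          congr 1
          refine Finset.sum_congr rfl fun j _ => ?_
          have hpre : MeasurableSet ((f)^[j * S] ⁻¹' B) := (hf.iterate (j * S)) hBm
          rw [lintegral_indicator hpre, setLIntegral_one, Measure.restrict_apply hpre]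
          have : (f)^[j * S] ⁻¹' B ∩ I = (f)^[j * S] ⁻¹' (B ∩ I) := by
            rw [Set.preimage_inter, hIj j]
          rw [this]
          exact (hμ.iterate (j * S)).measure_preimage (hBm.inter hI).nullMeasurableSet
      _ = μ (B ∩ I) := by
          rw [Finset.sum_const, Finset.card_range, nsmul_eq_mul, mul_comm (N : ℝ≥0∞),
            mul_assoc, ENNReal.mul_inv_cancel (by exact_mod_cast Nat.one_le_iff_ne_zero.mp hN)
              (ENNReal.natCast_ne_top N), mul_one]
  -- reverse Fatou
  have hfatou : limsup (fun N : ℕ => ∫⁻ x in I, (stmt11cnt f B S N x : ℝ≥0∞) / N ∂μ) atTop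
      ≤ ∫⁻ x in I, F x ∂μ := by
    refine limsup_lintegral_le (μ := μ.restrict I) (fun _ => (1:ℝ≥0∞)) humeas
      (fun N => ae_of_all _ fun x => stmt11div_le_one f B S N x) ?_
    rw [lintegral_one]
    exact (measure_lt_top _ _).ne
  have hLHS : limsup (fun N : ℕ => ∫⁻ x in I, (stmt11cnt f B S N x : ℝ≥0∞) / N ∂μ) atTop
      = μ (B ∩ I) := by
    have : (fun N : ℕ => ∫⁻ x in I, (stmt11cnt f B S N x : ℝ≥0∞) / N ∂μ)
        =ᶠ[atTop] fun _ => μ (B ∩ I) := by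
      filter_upwards [eventually_ge_atTop 1] with N hN using hint N hN
    rw [limsup_congr this, limsup_const]
  have hRHS : ∫⁻ x in I, F x ∂μ = 0 := by
    rw [setLIntegral_congr_fun hI (fun x hx => hx)]
    exact lintegral_zero
  have : μ (B ∩ I) ≤ 0 := by rw [← hLHS, ← hRHS]; exact hfatou
  exact le_antisymm this (zero_le)

/-- for a homeomorphism of a compact metric space preserving a Borel
probability measure `μ` (not assumed ergodic) and a subadditive sequence of continuous
functions satisfying the generalized domination bound `a_{kS} ≤ log λ` everywhere, almost
every point of the set `A = {a_S < -log λ}` has negative lower growth rate. -/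
theorem stmt11 {X : Type*} [MetricSpace X] [CompactSpace X]
    [MeasurableSpace X] [BorelSpace X]
    (f : X ≃ₜ X) (μ : Measure X) [IsProbabilityMeasure μ]
    (hμ : MeasurePreserving f μ μ)
    (a : ℕ → X → ℝ) (ha : ∀ n, Continuous (a n)) (ha0 : ∀ x : X, a 0 x = 0)
    (hsub : ∀ (x : X) (n k : ℕ), a (n + k) x ≤ a n ((⇑f)^[k] x) + a k x)
    (S : ℕ) (hS : 1 ≤ S) (lam : ℝ) (hlam : 1 ≤ lam)
    (hup : ∀ (x : X) (k : ℕ), 1 ≤ k → a (k * S) x ≤ Real.log lam) :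
    ∀ᵐ x ∂μ, x ∈ {y : X | a S y < -Real.log lam} →
      liminf (fun n : ℕ => ((1 / (n : ℝ) * a n x : ℝ) : EReal)) atTop < 0 := by
  have hL : 0 ≤ Real.log lam := Real.log_nonneg hlam
  set L := Real.log lam with hLdef
  set B : ℕ → Set X := fun m => {y | a S y ≤ -L - 1 / (m + 1)} with hBdef
  have hBm : ∀ m, MeasurableSet (B m) :=
    fun m => (isClosed_le (ha S) continuous_const).measurableSet
  have hfme : Measurable (⇑f) := f.continuous.measurable
  have hnull : ∀ m : ℕ, μ (B m ∩
      {x | limsup (fun N : ℕ => (stmt11cnt (⇑f) (B m) S N x : ℝ≥0∞) / N) atTop = 0}) = 0 :=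
    fun m => stmt11null hfme μ hμ (hBm m) S
  have hae : ∀ᵐ x ∂μ, ∀ m : ℕ, x ∉ B m ∩
      {x | limsup (fun N : ℕ => (stmt11cnt (⇑f) (B m) S N x : ℝ≥0∞) / N) atTop = 0} := by
    rw [ae_all_iff]
    exact fun m => measure_eq_zero_iff_ae_notMem.mp (hnull m)
  filter_upwards [hae] with x hx hxA
  obtain ⟨m, hm⟩ := exists_nat_one_div_lt (show (0:ℝ) < -L - a S x by linarith)
  set δ : ℝ := 1 / (m + 1) with hδdef
  have hδ : 0 < δ := by positivity
  have hxB : x ∈ B m := by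
    simp only [hBdef, Set.mem_setOf_eq]
    linarith
  set F : ℝ≥0∞ := limsup (fun N : ℕ => (stmt11cnt (⇑f) (B m) S N x : ℝ≥0∞) / N) atTop with hFdef
  have hF : F ≠ 0 := fun h0 => hx m ⟨hxB, h0⟩
  have hFle : F ≤ 1 :=
    limsup_le_of_le (by isBoundedDefault)
      (Eventually.of_forall fun N => stmt11div_le_one (⇑f) (B m) S N x)
  have hFtop : F ≠ ∞ := (lt_of_le_of_lt hFle ENNReal.one_lt_top).ne
  set t : ℝ≥0∞ := F / 2 with htdef
  have ht0 : t ≠ 0 := by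
    simp only [htdef, ENNReal.div_eq_top, ne_eq, ENNReal.div_eq_zero_iff]
    push_neg
    exact ⟨hF, ENNReal.ofNat_ne_top⟩
  have httop : t ≠ ∞ := by
    simp only [htdef]
    exact (ENNReal.div_lt_top hFtop (by norm_num)).ne
  have htlt : t < F := ENNReal.half_lt_self hF hFtop
  have hfreq : ∃ᶠ N : ℕ in atTop, t ≤ (stmt11cnt (⇑f) (B m) S N x : ℝ≥0∞) / N := by
    by_contra hc
    rw [not_frequently] at hc
    have : F ≤ t := limsup_le_of_le (by isBoundedDefault)
      (hc.mono fun N hN => le_of_not_ge hN)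
    exact absurd this (not_le.mpr htlt)
  set r : ℝ := t.toReal with hrdef
  have hr : 0 < r := ENNReal.toReal_pos ht0 httop
  -- combinatorial bound at x
  have hcomb := stmt11comb (⇑f) a ha0 hsub S L δ hL hδ hup (B m)
    (fun y hy => hy) x
  have hSpos : (0:ℝ) < S := by exact_mod_cast hS
  -- conclude
  have hKlt : -(δ * r) / (2 * (S:ℝ)) < 0 := by
    have h1 : 0 < (δ * r) / (2 * (S:ℝ)) := by positivity
    rw [neg_div]
    linarith
  refine lt_of_le_of_lt (liminf_le_of_frequently_le' ?_)
    (show ((-(δ * r) / (2 * (S:ℝ)) : ℝ) : EReal) < 0 by exact_mod_cast hKlt)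
  rw [frequently_atTop]
  intro M0
  obtain ⟨N, hNb, htN⟩ := frequently_atTop.mp hfreq (max (max 1 M0) ⌈2 * L / (δ * r)⌉₊)
  have hN1 : 1 ≤ N := le_trans (le_trans (le_max_left 1 M0) (le_max_left _ _)) hNb
  have hNM0 : M0 ≤ N := le_trans (le_trans (le_max_right 1 M0) (le_max_left _ _)) hNb
  have hNceil : 2 * L / (δ * r) ≤ (N:ℝ) := Nat.ceil_le.mp (le_trans (le_max_right _ _) hNb)
  refine ⟨N * S, le_trans hNM0 (Nat.le_mul_of_pos_right N (by omega)), ?_⟩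
  have hNpos : (0:ℝ) < N := by exact_mod_cast hN1
  have hn : (0:ℝ) < ((N * S : ℕ) : ℝ) := by
    have : 1 ≤ N * S := Nat.one_le_iff_ne_zero.mpr (by positivity)
    exact_mod_cast this
  have hcN : t * N ≤ (stmt11cnt (⇑f) (B m) S N x : ℝ≥0∞) := by
    rw [← ENNReal.le_div_iff_mul_le
      (Or.inl (by exact_mod_cast Nat.one_le_iff_ne_zero.mp hN1))
      (Or.inl (ENNReal.natCast_ne_top N))]
    exact htN
  have hcNr : r * N ≤ (stmt11cnt (⇑f) (B m) S N x : ℝ) := by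
    have h1 := ENNReal.toReal_mono (ENNReal.natCast_ne_top _) hcN
    rwa [ENNReal.toReal_mul, ENNReal.toReal_natCast] at h1
  have hM := hcomb (N - 1)
  have hNS : (N - 1) * S + S = N * S := by
    have h1 : N - 1 + 1 = N := Nat.succ_pred_eq_of_pos hN1
    calc (N - 1) * S + S = ((N - 1) + 1) * S := by ring
    _ = N * S := by rw [h1]
  have hN11 : N - 1 + 1 = N := Nat.succ_pred_eq_of_pos hN1
  rw [hNS, hN11] at hM
  have hindle : (B m).indicator (fun _ => -L) ((⇑f)^[(N-1) * S] x) ≤ 0 := by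
    classical
    rw [Set.indicator_apply]
    split <;> linarith
  have haN : a (N * S) x ≤ L - δ * (r * N) := by nlinarith [hM, hindle, hcNr, hδ.le]
  have hbig : 2 * L ≤ δ * r * N := by
    have h2 := hNceil
    rw [div_le_iff₀ (by positivity)] at h2
    linarith
  show ((1 / ((N * S : ℕ) : ℝ) * a (N * S) x : ℝ) : EReal) ≤ _
  rw [EReal.coe_le_coe_iff]
  rw [div_mul_eq_mul_div, one_mul, div_le_div_iff₀ hn (by positivity)]
  have hcast : ((N * S : ℕ) : ℝ) = (N : ℝ) * (S : ℝ) := by push_cast; ring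
  rw [hcast]
  nlinarith [mul_le_mul_of_nonneg_right haN (by positivity : (0:ℝ) ≤ 2 * (S:ℝ)),
    mul_le_mul_of_nonneg_right hbig hSpos.le, hr.le, hδ.le, hNpos.le]
end
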